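/- Let n ≥ 3 and let {V_1, V_2} be a partition of {1,…,n} into two nonempty parts. Suppose D_1 is a family of 3-element subsets of V_1 such that every 2-element subset of V_1 is contained in some member of D_1, and D_2 is a family of 3-element subsets of V_2 such that every 2-element subset of V_2 is contained in some member of D_2. Then D_1 ∪ D_2 is a dominating set of the 3-token graph F_3(K_n). -/

import Mathlib

/-- The `k`-token graph of a simple graph `G`: vertices are the `k`-element
subsets of `V(G)`, and two subsets are adjacent when their symmetric difference
is a pair `{u, v}` of adjacent vertices of `G`. -/
def tokenGraph {V : Type*} [DecidableEq V] (G : SimpleGraph V) (k : ℕ) :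
    SimpleGraph {A : Finset V // A.card = k} where
  Adj A B := ∃ u v : V, G.Adj u v ∧ symmDiff A.1 B.1 = {u, v}
  symm := by
    refine ⟨?_⟩
    rintro A B ⟨u, v, huv, h⟩
    exact ⟨u, v, huv, by rwa [symmDiff_comm]⟩
  loopless := by
    refine ⟨?_⟩
    rintro A ⟨u, v, huv, h⟩
    rw [symmDiff_self] at h
    have : u ∈ (⊥ : Finset V) := h ▸ Finset.mem_insert_self u {v}
    simp at this

/-- A dominating set: every vertex is in `D` or adjacent to a vertex of `D`. -/
def IsDominatingSet {V : Type*} (G : SimpleGraph V) (D : Set V) : Prop :=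
  ∀ v : V, v ∈ D ∨ ∃ u ∈ D, G.Adj u v

/-- The domination number: minimum cardinality of a dominating set. -/
noncomputable def dominationNumber {V : Type*} [Fintype V] (G : SimpleGraph V) : ℕ :=
  sInf {m : ℕ | ∃ D : Finset V, IsDominatingSet G ↑D ∧ D.card = m}

/-- The star graph `S n` with vertex set `{0, 1, …, n}`, center `0` adjacent to
each leaf `1, …, n`. -/
def starGraph (n : ℕ) : SimpleGraph (Fin (n + 1)) where
  Adj u v := u ≠ v ∧ (u = 0 ∨ v = 0)
  symm := by refine ⟨?_⟩; rintro u v ⟨h1, h2⟩; exact ⟨h1.symm, h2.symm⟩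
  loopless := by refine ⟨?_⟩; rintro u ⟨h1, _⟩; exact h1 rfl

lemma key_dom (n : ℕ) (W : Finset (Fin n)) (D : Set {A : Finset (Fin n) // A.card = 3})
    (hcov : ∀ e : Finset (Fin n), e ⊆ W → e.card = 2 → ∃ A ∈ D, e ⊆ A.1)
    (B : {A : Finset (Fin n) // A.card = 3}) (hB : 2 ≤ (B.1 ∩ W).card) :
    ∃ A ∈ D, A = B ∨ (tokenGraph (⊤ : SimpleGraph (Fin n)) 3).Adj A B := by
  obtain ⟨e, he, hecard⟩ := Finset.exists_subset_card_eq hB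
  obtain ⟨A, hAD, heA⟩ := hcov e (he.trans (Finset.inter_subset_right)) hecard
  refine ⟨A, hAD, ?_⟩
  by_cases hAB : A.1 = B.1
  · exact Or.inl (Subtype.ext hAB)
  · right
    have heB : e ⊆ B.1 := he.trans Finset.inter_subset_left
    have hsub : e ⊆ A.1 ∩ B.1 := Finset.subset_inter heA heB
    have h2 : 2 ≤ (A.1 ∩ B.1).card := by rw [← hecard]; exact Finset.card_le_card hsub
    have h3 : (A.1 ∩ B.1).card ≤ 3 := by
      have h := Finset.card_le_card (Finset.inter_subset_left : A.1 ∩ B.1 ⊆ A.1)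
      rwa [A.2] at h
    have hne3 : (A.1 ∩ B.1).card ≠ 3 := by
      intro h
      have h1 : A.1 ∩ B.1 = A.1 :=
        Finset.eq_of_subset_of_card_le Finset.inter_subset_left (by omega)
      have h2' : A.1 ∩ B.1 = B.1 :=
        Finset.eq_of_subset_of_card_le Finset.inter_subset_right (by rw [h, B.2])
      exact hAB (h1 ▸ h2')
    have hcard2 : (A.1 ∩ B.1).card = 2 := by omega
    have hsd : (symmDiff A.1 B.1).card = 2 := by
      have hd : Disjoint (A.1 \ B.1) (B.1 \ A.1) := disjoint_sdiff_sdiff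
      have : symmDiff A.1 B.1 = (A.1 \ B.1) ∪ (B.1 \ A.1) := rfl
      rw [this, Finset.card_union_of_disjoint hd]
      have ha := Finset.card_inter_add_card_sdiff A.1 B.1
      have hb := Finset.card_inter_add_card_sdiff B.1 A.1
      rw [Finset.inter_comm] at hb
      rw [A.2] at ha; rw [B.2] at hb
      omega
    obtain ⟨u, v, huv, h⟩ := Finset.card_eq_two.mp hsd
    exact ⟨u, v, by simp [huv], h⟩

/-- If `{V₁, V₂}` is a partition of `{1, …, n}` into two nonempty parts, `D₁` is
a family of 3-subsets of `V₁` covering all 2-subsets of `V₁`, and `D₂` is a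
family of 3-subsets of `V₂` covering all 2-subsets of `V₂`, then `D₁ ∪ D₂` is a
dominating set of `F₃(Kₙ)`. -/
theorem union_covering_designs_dominating (n : ℕ) (hn : 3 ≤ n)
    (V1 V2 : Finset (Fin n)) (hdisj : Disjoint V1 V2) (hunion : V1 ∪ V2 = Finset.univ)
    (h1 : V1.Nonempty) (h2 : V2.Nonempty)
    (D1 D2 : Set {A : Finset (Fin n) // A.card = 3})
    (hD1 : ∀ A ∈ D1, A.1 ⊆ V1) (hD2 : ∀ A ∈ D2, A.1 ⊆ V2)
    (hcov1 : ∀ e : Finset (Fin n), e ⊆ V1 → e.card = 2 → ∃ A ∈ D1, e ⊆ A.1)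
    (hcov2 : ∀ e : Finset (Fin n), e ⊆ V2 → e.card = 2 → ∃ A ∈ D2, e ⊆ A.1) :
    IsDominatingSet (tokenGraph (⊤ : SimpleGraph (Fin n)) 3) (D1 ∪ D2) := by
  intro B
  have hd : Disjoint (B.1 ∩ V1) (B.1 ∩ V2) :=
    hdisj.mono Finset.inter_subset_right Finset.inter_subset_right
  have hsum : (B.1 ∩ V1).card + (B.1 ∩ V2).card = 3 := by
    rw [← Finset.card_union_of_disjoint hd, ← Finset.inter_union_distrib_left, hunion,
      Finset.inter_univ, B.2]
  by_cases hc : 2 ≤ (B.1 ∩ V1).card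
  · obtain ⟨A, hA, h⟩ := key_dom n V1 D1 hcov1 B hc
    rcases h with h | h
    · exact Or.inl (h ▸ Set.mem_union_left _ hA)
    · exact Or.inr ⟨A, Set.mem_union_left _ hA, h⟩
  · have hc2 : 2 ≤ (B.1 ∩ V2).card := by omega
    obtain ⟨A, hA, h⟩ := key_dom n V2 D2 hcov2 B hc2
    rcases h with h | h
    · exact Or.inl (h ▸ Set.mem_union_right _ hA)
    · exact Or.inr ⟨A, Set.mem_union_right _ hA, h⟩
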